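/- Let Q be a weakly connected quiver having a loop, i.e., an arrow from some vertex to itself. Then the separated quiver ℤ_v Q is weakly connected (it has exactly one weakly connected component). -/

import Mathlib

/-- The separated quiver `ℤ_v Q` of a quiver `Q`: the vertices are `Q × ℤ`, and for each
arrow `α : i ⟶ j` of `Q` and each `n : ℤ` there is one arrow `(i, n) ⟶ (j, n + 1)`. -/
instance sepQuiver (Q : Type) [Quiver Q] : Quiver (Q × ℤ) :=
  ⟨fun p q => (p.1 ⟶ q.1) × PLift (q.2 = p.2 + 1)⟩

section Aux

variable (Q : Type) [Quiver Q]

open Quiver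

/-- connectedness relation in the separated quiver -/
def sepRel (a b : Q × ℤ) : Prop :=
  Nonempty (@Quiver.Path (Quiver.Symmetrify (Q × ℤ)) _ a b)

lemma sepRel_refl (a : Q × ℤ) : sepRel Q a a := ⟨Quiver.Path.nil⟩

lemma sepRel_trans {a b c : Q × ℤ} (h : sepRel Q a b) (h' : sepRel Q b c) : sepRel Q a c := by
  obtain ⟨p⟩ := h; obtain ⟨q⟩ := h'; exact ⟨p.comp q⟩

lemma sepRel_symm {a b : Q × ℤ} (h : sepRel Q a b) : sepRel Q b a := by
  obtain ⟨p⟩ := h; exact ⟨p.reverse⟩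

variable {Q}

lemma sepRel_vstep (v : Q) (e : v ⟶ v) (n : ℤ) : sepRel Q (v, n) (v, n + 1) :=
  ⟨Quiver.Hom.toPath (show @Quiver.Hom (Quiver.Symmetrify (Q × ℤ)) _ (v, n) (v, n + 1) from
    Sum.inl ⟨e, PLift.up rfl⟩)⟩

lemma sepRel_v (v : Q) (e : v ⟶ v) (n : ℤ) : sepRel Q (v, 0) (v, n) := by
  induction n using Int.induction_on with
  | zero => exact sepRel_refl Q _
  | succ k ih => exact sepRel_trans Q ih (sepRel_vstep v e k)
  | pred k ih =>
      refine sepRel_trans Q ih (sepRel_symm Q ?_)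
      have := sepRel_vstep v e (-k - 1)
      simpa using this

lemma sepRel_vv (v : Q) (e : v ⟶ v) (m n : ℤ) : sepRel Q (v, m) (v, n) :=
  sepRel_trans Q (sepRel_symm Q (sepRel_v v e m)) (sepRel_v v e n)

lemma sepRel_lift {a b : Q} (p : @Quiver.Path (Quiver.Symmetrify Q) _ a b) :
    ∀ n : ℤ, ∃ m : ℤ, sepRel Q (a, n) (b, m) := by
  induction p with
  | nil => exact fun n => ⟨n, sepRel_refl Q _⟩
  | @cons c b p f ih =>
      intro n
      obtain ⟨m, hm⟩ := ih n
      rcases f with g | g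
      · exact ⟨m + 1, sepRel_trans Q hm
          ⟨Quiver.Hom.toPath (show @Quiver.Hom (Quiver.Symmetrify (Q × ℤ)) _ (c, m) (b, m + 1) from
            Sum.inl ⟨g, PLift.up rfl⟩)⟩⟩
      · refine ⟨m - 1, sepRel_trans Q hm
          ⟨Quiver.Hom.toPath (show @Quiver.Hom (Quiver.Symmetrify (Q × ℤ)) _ (c, m) (b, m - 1) from
            Sum.inr ⟨g, PLift.up ?_⟩)⟩⟩
        omega

end Aux

/-- If `Q` is a weakly connected quiver having a loop (an arrow from some vertex to
itself), then the separated quiver `ℤ_v Q` is weakly connected: it is nonempty and has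
exactly one weakly connected component. -/
theorem sep_connected_of_loop
    (Q : Type) [Quiver Q] [Nonempty Q]
    [Subsingleton (Quiver.WeaklyConnectedComponent Q)]
    (v : Q) (e : v ⟶ v) :
    Nonempty (Quiver.WeaklyConnectedComponent (Q × ℤ)) ∧
      Subsingleton (Quiver.WeaklyConnectedComponent (Q × ℤ)) := by
  have key : ∀ a : Q × ℤ, sepRel Q a (v, 0) := by
    rintro ⟨q, n⟩
    have hq : (Quiver.WeaklyConnectedComponent.mk q : Quiver.WeaklyConnectedComponent Q) =
        Quiver.WeaklyConnectedComponent.mk v := Subsingleton.elim _ _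
    obtain ⟨p⟩ := (Quiver.WeaklyConnectedComponent.eq q v).mp hq
    obtain ⟨m, hm⟩ := sepRel_lift p n
    exact sepRel_trans Q hm (sepRel_vv v e m 0)
  refine ⟨⟨Quiver.WeaklyConnectedComponent.mk (v, 0)⟩, ⟨?_⟩⟩
  intro x y
  induction x using Quotient.inductionOn' with
  | h a =>
    induction y using Quotient.inductionOn' with
    | h b =>
      exact Quotient.sound' (sepRel_trans Q (key a) (sepRel_symm Q (key b)))
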